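/- If Q is a finite quiver whose underlying graph is a tree with n vertices, then coker(B_Q - B_Q^T) is a free abelian group (of rank n - 2k where k is the maximal number of edges in a matching reduction by repeatedly cutting off leaf-edges). -/

import Mathlib

/-- Cokernel of an integer matrix, viewed as the quotient of `ℤ^n` by its image. -/
abbrev cokerG {m : Type} [Fintype m] [DecidableEq m] (S : Matrix m m ℤ) :=
  (m → ℤ) ⧸ LinearMap.range S.mulVecLin

open Submodule Matrix SimpleGraph

theorem killCoord {X : Type} [Fintype X] [DecidableEq X] (v : X) (g : X → ℤ)
    (hg : g v * g v = 1) (L0 : Submodule ℤ (X → ℤ))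
    (hL0 : ∀ y ∈ L0, y v = 0) :
    Nonempty (((X → ℤ) ⧸ (span ℤ {g} ⊔ L0)) ≃ₗ[ℤ]
      (({i : X // i ≠ v} → ℤ) ⧸
        L0.map (LinearMap.funLeft ℤ ℤ (Subtype.val : {i : X // i ≠ v} → X)))) := by
  set r : (X → ℤ) →ₗ[ℤ] ({i : X // i ≠ v} → ℤ) :=
    LinearMap.funLeft ℤ ℤ (Subtype.val : {i : X // i ≠ v} → X) with hr
  set T : (X → ℤ) →ₗ[ℤ] (X → ℤ) :=
    LinearMap.id - (g v) • ((LinearMap.proj v : (X → ℤ) →ₗ[ℤ] ℤ).smulRight g) with hTdef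
  have hT : ∀ x : X → ℤ, T x = x - (g v * x v) • g := by
    intro x
    funext i
    simp only [hTdef, LinearMap.sub_apply, LinearMap.id_apply, LinearMap.smul_apply,
      LinearMap.smulRight_apply, LinearMap.proj_apply, Pi.sub_apply, Pi.smul_apply,
      smul_eq_mul]
    ring
  have hTv : ∀ x : X → ℤ, (T x) v = 0 := by
    intro x
    rw [hT]
    simp only [Pi.sub_apply, Pi.smul_apply, smul_eq_mul]
    rw [mul_assoc, mul_comm (x v) (g v), ← mul_assoc, hg, one_mul, sub_self]
  set ψ : (X → ℤ) →ₗ[ℤ] (({i : X // i ≠ v} → ℤ) ⧸ L0.map r) :=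
    (L0.map r).mkQ.comp (r.comp T) with hψ
  have hsurj : Function.Surjective ψ := by
    intro z
    obtain ⟨w, hw⟩ := (L0.map r).mkQ_surjective z
    refine ⟨fun i => if h : i = v then 0 else w ⟨i, h⟩, ?_⟩
    rw [← hw]
    simp only [hψ, LinearMap.comp_apply]
    congr 1
    rw [hT]
    simp only [dif_pos, mul_zero, zero_smul, sub_zero]
    funext j
    simp [hr, LinearMap.funLeft, dif_neg j.2]
  have hker : LinearMap.ker ψ = span ℤ {g} ⊔ L0 := by
    apply le_antisymm
    · intro x hx
      simp only [LinearMap.mem_ker, hψ, LinearMap.comp_apply, Submodule.mkQ_apply,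
        Submodule.Quotient.mk_eq_zero] at hx
      obtain ⟨y, hy, hyx⟩ := hx
      have hxy : T x = y := by
        funext i
        by_cases h : i = v
        · subst h; rw [hTv, hL0 y hy]
        · have := congrFun hyx ⟨i, h⟩
          simpa [hr, LinearMap.funLeft] using this.symm
      have hx2 : x = (g v * x v) • g + y := by
        rw [← hxy, hT]
        abel
      rw [hx2]
      refine add_mem ?_ ?_
      · exact le_sup_left (a := span ℤ {g}) (b := L0)
          (Submodule.smul_mem _ _ (subset_span rfl))
      · exact le_sup_right (a := span ℤ {g}) (b := L0) hy
    · apply sup_le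
      · rw [span_le, Set.singleton_subset_iff]
        simp only [SetLike.mem_coe, LinearMap.mem_ker, hψ, LinearMap.comp_apply]
        have : T g = 0 := by
          rw [hT, hg, one_smul, sub_self]
        rw [this]
        simp
      · intro y hy
        simp only [LinearMap.mem_ker, hψ, LinearMap.comp_apply, Submodule.mkQ_apply,
          Submodule.Quotient.mk_eq_zero]
        have : T y = y := by rw [hT, hL0 y hy, mul_zero, zero_smul, sub_zero]
        rw [this]
        exact Submodule.mem_map_of_mem hy
  exact ⟨(Submodule.quotEquivOfEq _ _ hker.symm).trans (ψ.quotKerEquivOfSurjective hsurj)⟩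


theorem pivot {X : Type} [Fintype X] [DecidableEq X] (S : Matrix X X ℤ)
    (u v : X) (huv : u ≠ v) (hunit : S u v * S u v = 1) (hunit2 : S v u * S v u = 1)
    (hcol : ∀ i, i ≠ u → S i v = 0) (hrow : ∀ j, j ≠ u → S v j = 0) :
    Nonempty (((X → ℤ) ⧸ LinearMap.range S.mulVecLin) ≃ₗ[ℤ]
      (({i : {i : X // i ≠ u} // i ≠ (⟨v, Ne.symm huv⟩ : {i : X // i ≠ u})} → ℤ) ⧸
        LinearMap.range (S.submatrix (fun i => i.1.1) (fun i => i.1.1) :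
          Matrix {i : {i : X // i ≠ u} // i ≠ (⟨v, Ne.symm huv⟩ : {i : X // i ≠ u})}
            {i : {i : X // i ≠ u} // i ≠ (⟨v, Ne.symm huv⟩ : {i : X // i ≠ u})} ℤ).mulVecLin)) := by
  classical
  set X₁ := {i : X // i ≠ u}
  set v₁ : X₁ := ⟨v, Ne.symm huv⟩
  set X₂ := {i : X₁ // i ≠ v₁}
  -- columns of S
  set c : X → (X → ℤ) := fun j => fun i => S i j with hc
  -- step 1: L = span {c v} ⊔ L0
  set L0 : Submodule ℤ (X → ℤ) :=
    span ℤ (Set.range fun j : {j : X // j ≠ v} => c j.1 - (S u v * S u j.1) • c v) with hL0def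
  have hrange : LinearMap.range S.mulVecLin = span ℤ {c v} ⊔ L0 := by
    rw [Matrix.range_mulVecLin]
    apply le_antisymm
    · rw [span_le]
      rintro _ ⟨j, rfl⟩
      have hTj : S.col j = c j := rfl
      rw [hTj]
      by_cases hj : j = v
      · rw [hj]
        exact le_sup_left (a := span ℤ {c v}) (b := L0) (subset_span rfl)
      · have h1 : c j = (c j - (S u v * S u j) • c v) + (S u v * S u j) • c v := by abel
        rw [h1]
        refine add_mem ?_ ?_
        · exact le_sup_right (a := span ℤ {c v}) (b := L0)
            (subset_span ⟨⟨j, hj⟩, rfl⟩)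
        · exact le_sup_left (a := span ℤ {c v}) (b := L0)
            (Submodule.smul_mem _ _ (subset_span rfl))
    · apply sup_le
      · rw [span_le, Set.singleton_subset_iff]
        exact subset_span ⟨v, rfl⟩
      · rw [span_le]
        rintro _ ⟨j, rfl⟩
        exact sub_mem (subset_span ⟨j.1, rfl⟩)
          (Submodule.smul_mem _ _ (subset_span ⟨v, rfl⟩))
  have hL0u : ∀ y ∈ L0, y u = 0 := by
    intro y hy
    have : L0 ≤ LinearMap.ker (LinearMap.proj u : (X → ℤ) →ₗ[ℤ] ℤ) := by
      rw [hL0def, span_le]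
      rintro _ ⟨j, rfl⟩
      simp only [SetLike.mem_coe, LinearMap.mem_ker, LinearMap.proj_apply,
        Pi.sub_apply, Pi.smul_apply, smul_eq_mul, hc]
      rw [mul_assoc, mul_comm (S u j.1) (S u v), ← mul_assoc, hunit, one_mul, sub_self]
    exact this hy
  have hgv : (c v) u * (c v) u = 1 := hunit
  obtain ⟨e1⟩ := killCoord u (c v) hgv L0 hL0u
  rw [← hrange] at e1
  -- identify L0.map r₁ with span of restricted columns
  set r₁ : (X → ℤ) →ₗ[ℤ] (X₁ → ℤ) := LinearMap.funLeft ℤ ℤ (Subtype.val : X₁ → X) with hr₁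
  set d : {j : X // j ≠ v} → (X₁ → ℤ) := fun j => fun i => S i.1 j.1 with hd
  have hrcv : r₁ (c v) = 0 := by
    funext i
    exact hcol i.1 i.2
  have hmap : L0.map r₁ = span ℤ (Set.range d) := by
    rw [hL0def, Submodule.map_span, ← Set.range_comp]
    have hcomp : (⇑r₁ ∘ fun j : {j : X // j ≠ v} => c j.1 - (S u v * S u j.1) • c v) = d := by
      funext j
      show r₁ (c j.1 - (S u v * S u j.1) • c v) = d j
      rw [map_sub, LinearMap.map_smul, hrcv, smul_zero, sub_zero]
      rfl
    rw [hcomp]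
  rw [hmap] at e1
  -- step 2
  set g₂ : X₁ → ℤ := d ⟨u, huv⟩ with hg₂
  set L0₂ : Submodule ℤ (X₁ → ℤ) :=
    span ℤ (Set.range fun j : {j : X // j ≠ u ∧ j ≠ v} => (fun i : X₁ => S i.1 j.1)) with hL0₂def
  have hsplit : span ℤ (Set.range d) = span ℤ {g₂} ⊔ L0₂ := by
    apply le_antisymm
    · rw [span_le]
      rintro _ ⟨j, rfl⟩
      by_cases hj : j.1 = u
      · have : d j = g₂ := by
          rw [hg₂, hd]
          simp only [hj]
        rw [this]
        exact le_sup_left (a := span ℤ {g₂}) (b := L0₂) (subset_span rfl)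
      · exact le_sup_right (a := span ℤ {g₂}) (b := L0₂) (subset_span ⟨⟨j.1, hj, j.2⟩, rfl⟩)
    · apply sup_le
      · rw [span_le, Set.singleton_subset_iff]
        exact subset_span ⟨⟨u, huv⟩, rfl⟩
      · rw [span_le]
        rintro _ ⟨j, rfl⟩
        exact subset_span ⟨⟨j.1, j.2.2⟩, rfl⟩
  rw [hsplit] at e1
  have hg₂v : g₂ v₁ * g₂ v₁ = 1 := hunit2
  have hL0₂v : ∀ y ∈ L0₂, y v₁ = 0 := by
    intro y hy
    have : L0₂ ≤ LinearMap.ker (LinearMap.proj v₁ : (X₁ → ℤ) →ₗ[ℤ] ℤ) := by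
      rw [hL0₂def, span_le]
      rintro _ ⟨j, rfl⟩
      simp only [SetLike.mem_coe, LinearMap.mem_ker, LinearMap.proj_apply]
      exact hrow j.1 j.2.1
    exact this hy
  obtain ⟨e2⟩ := killCoord v₁ g₂ hg₂v L0₂ hL0₂v
  -- identify final lattice
  set r₂ : (X₁ → ℤ) →ₗ[ℤ] (X₂ → ℤ) := LinearMap.funLeft ℤ ℤ (Subtype.val : X₂ → X₁) with hr₂
  have hfinal : L0₂.map r₂ = LinearMap.range
      (S.submatrix (fun i : X₂ => i.1.1) (fun i : X₂ => i.1.1)).mulVecLin := by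
    rw [Matrix.range_mulVecLin, hL0₂def, Submodule.map_span, ← Set.range_comp]
    congr 1
    ext w
    constructor
    · rintro ⟨j, rfl⟩
      have hj1 : (⟨j.1, j.2.1⟩ : X₁) ≠ v₁ := by
        intro h
        exact j.2.2 (congrArg Subtype.val h)
      exact ⟨⟨⟨j.1, j.2.1⟩, hj1⟩, rfl⟩
    · rintro ⟨j, rfl⟩
      have hj2 : j.1.1 ≠ v := by
        intro h
        exact j.2 (Subtype.ext h)
      exact ⟨⟨j.1.1, j.1.2, hj2⟩, rfl⟩
  rw [hfinal] at e2
  exact ⟨e1.trans e2⟩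

private lemma walk_concat_decomp {V : Type} {G : SimpleGraph V} {a b : V}
    (p : G.Walk a b) (h : p.length ≠ 0) :
    ∃ (x : V) (q : G.Walk a x) (h' : G.Adj x b), p = q.concat h' := by
  cases p with
  | nil => simp at h
  | cons hadj q =>
    obtain ⟨x, q', h', heq⟩ := Walk.exists_cons_eq_concat hadj q
    exact ⟨x, q', h', heq⟩

theorem exists_leaf {V : Type} [Fintype V] [DecidableEq V] {G : SimpleGraph V}
    (hG : G.IsAcyclic) {a₀ b₀ : V} (hab : G.Adj a₀ b₀) :
    ∃ u v : V, G.Adj u v ∧ ∀ x, G.Adj v x → x = u := by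
  classical
  set P : ℕ → Prop := fun l => ∃ (a b : V) (p : G.Walk a b), p.IsPath ∧ p.length = l with hPdef
  have hP1 : P 1 := by
    refine ⟨a₀, b₀, Walk.cons hab Walk.nil, ?_, by simp⟩
    simp [Walk.cons_isPath_iff, hab.ne]
  have hcard : 1 ≤ Fintype.card V := Fintype.card_pos_iff.mpr ⟨a₀⟩
  set M := Nat.findGreatest P (Fintype.card V) with hMdef
  have hM1 : 1 ≤ M := Nat.le_findGreatest hcard hP1
  obtain ⟨a, b, p, hp, hlen⟩ := Nat.findGreatest_spec hcard hP1
  obtain ⟨x, q, hxb, heq⟩ := walk_concat_decomp p (by omega)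
  refine ⟨x, b, hxb, ?_⟩
  intro w hbw
  by_cases hw : w ∈ p.support
  · -- w is on the path; the piece from w to b must be the single edge
    have hwb : w ≠ b := hbw.ne'
    have hr : (p.dropUntil w hw).IsPath := hp.dropUntil hw
    have hsingle : (Walk.cons hbw.symm Walk.nil : G.Walk w b).IsPath := by
      simp [Walk.cons_isPath_iff, hwb]
    have hrs : p.dropUntil w hw = Walk.cons hbw.symm Walk.nil := by
      have := hG.path_unique ⟨p.dropUntil w hw, hr⟩ ⟨Walk.cons hbw.symm Walk.nil, hsingle⟩
      exact congrArg Subtype.val this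
    have hsplit : (p.takeUntil w hw).concat hbw.symm = p := by
      conv_rhs => rw [← p.take_spec hw]
      rw [hrs]
      rfl
    have hcc : (p.takeUntil w hw).concat hbw.symm = q.concat hxb := by
      rw [hsplit, heq]
    obtain ⟨hv, -⟩ := Walk.concat_inj hcc
    exact hv
  · -- extend the path: contradiction with maximality
    exfalso
    have hconcat : (p.concat hbw).IsPath := by
      rw [← Walk.isPath_reverse_iff, Walk.reverse_concat]
      refine Walk.IsPath.cons hp.reverse ?_
      simp only [Walk.support_reverse, List.mem_reverse]
      exact hw
    have hlt : M + 1 < Fintype.card V := by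
      have := hconcat.length_lt
      rw [Walk.length_concat, hlen] at this
      exact this
    have : ¬ P (M + 1) :=
      Nat.findGreatest_is_greatest (P := P) (n := Fintype.card V) (hMdef ▸ lt_add_one M) (by omega)
    exact this ⟨a, w, p.concat hbw, hconcat, by rw [Walk.length_concat, hlen]⟩



lemma acyclic_comap {V W : Type} {G : SimpleGraph W} (hG : G.IsAcyclic)
    (f : V → W) (hf : Function.Injective f) : (G.comap f).IsAcyclic := by
  intro v c hc
  exact hG (c.map (SimpleGraph.Hom.comap f G)) ((Walk.map_isCycle_iff_of_injective hf).mpr hc)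

lemma coker_of_zero {X : Type} [Fintype X] [DecidableEq X] (S : Matrix X X ℤ) (h : S = 0) :
    Nonempty (((X → ℤ) ⧸ LinearMap.range S.mulVecLin) ≃ₗ[ℤ] (Fin (Fintype.card X) → ℤ)) := by
  subst h
  have h1 : LinearMap.range (0 : Matrix X X ℤ).mulVecLin = ⊥ := by
    rw [Matrix.mulVecLin_zero, LinearMap.range_zero]
  exact ⟨(Submodule.quotEquivOfEqBot _ h1).trans
    (LinearEquiv.funCongrLeft ℤ ℤ (Fintype.equivFin X).symm)⟩

lemma card_ne {Y : Type} [Fintype Y] [DecidableEq Y] (y : Y) :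
    Fintype.card {x : Y // x ≠ y} = Fintype.card Y - 1 := by
  have : Fintype.card {x : Y // ¬ x = y} = Fintype.card Y - Fintype.card {x : Y // x = y} :=
    Fintype.card_subtype_compl _
  simpa [Fintype.card_subtype_eq] using this

theorem mainInd (N : ℕ) : ∀ (X : Type) (_ : Fintype X) (_ : DecidableEq X),
    Fintype.card X ≤ N → ∀ (S : Matrix X X ℤ),
    (∀ i j, S j i = - S i j) →
    (∀ i j, S i j = 0 ∨ S i j = 1 ∨ S i j = -1) →
    ∀ (G : SimpleGraph X), (∀ i j, G.Adj i j ↔ S i j ≠ 0) → G.IsAcyclic →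
    ∃ k, 2 * k ≤ Fintype.card X ∧
      Nonempty (((X → ℤ) ⧸ LinearMap.range S.mulVecLin) ≃ₗ[ℤ]
        (Fin (Fintype.card X - 2 * k) → ℤ)) := by
  induction N with
  | zero =>
    intro X _ _ hcard S hskew hval G hG hacyc
    have hempty : IsEmpty X := Fintype.card_eq_zero_iff.mp (by omega)
    have hS : S = 0 := by
      ext i j
      exact hempty.elim i
    refine ⟨0, by omega, ?_⟩
    simpa using coker_of_zero S hS
  | succ N IH =>
    intro X _ _ hcard S hskew hval G hG hacyc
    by_cases hS : S = 0
    · refine ⟨0, by omega, ?_⟩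
      simpa using coker_of_zero S hS
    · have hex : ∃ a b, S a b ≠ 0 := by
        by_contra h
        push_neg at h
        exact hS (by ext i j; exact h i j)
      obtain ⟨a, b, hab⟩ := hex
      obtain ⟨u, v, huv, hleaf⟩ := exists_leaf hacyc ((hG a b).mpr hab)
      have hSuv : S u v ≠ 0 := (hG u v).mp huv
      have hne : u ≠ v := huv.ne
      have hS1 : S u v * S u v = 1 := by
        rcases hval u v with h | h | h
        · exact absurd h hSuv
        · rw [h]; norm_num
        · rw [h]; norm_num
      have hS2 : S v u * S v u = 1 := by
        rw [hskew u v, neg_mul_neg]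
        exact hS1
      have hcol : ∀ i, i ≠ u → S i v = 0 := by
        intro i hi
        by_contra h
        refine hi (hleaf i ((hG v i).mpr ?_))
        rw [hskew i v]
        simpa using h
      have hrow : ∀ j, j ≠ u → S v j = 0 := by
        intro j hj
        by_contra h
        exact hj (hleaf j ((hG v j).mpr h))
      obtain ⟨e⟩ := pivot S u v hne hS1 hS2 hcol hrow
      set X₂ := {i : {i : X // i ≠ u} // i ≠ (⟨v, Ne.symm hne⟩ : {i : X // i ≠ u})} with hX₂
      set S' : Matrix X₂ X₂ ℤ := S.submatrix (fun i => i.1.1) (fun i => i.1.1) with hS'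
      have hXge2 : 2 ≤ Fintype.card X :=
        Fintype.one_lt_card_iff_nontrivial.mpr ⟨⟨u, v, hne⟩⟩
      have hcard2 : Fintype.card X₂ = Fintype.card X - 2 := by
        have h1 : Fintype.card {i : X // i ≠ u} = Fintype.card X - 1 := card_ne u
        have h2 : Fintype.card X₂ = Fintype.card {i : X // i ≠ u} - 1 := card_ne _
        omega
      have hinj : Function.Injective (fun i : X₂ => i.1.1) :=
        Subtype.val_injective.comp Subtype.val_injective
      obtain ⟨k, hk, ⟨e2⟩⟩ := IH X₂ inferInstance (Subtype.instDecidableEq) (by omega) S'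
        (fun i j => hskew _ _) (fun i j => hval _ _)
        (G.comap (fun i : X₂ => i.1.1)) (fun i j => hG _ _)
        (acyclic_comap hacyc _ hinj)
      have hcc : Fintype.card X - 2 * (k + 1) = Fintype.card X₂ - 2 * k := by omega
      have e3 : (Fin (Fintype.card X₂ - 2 * k) → ℤ) ≃ₗ[ℤ]
          (Fin (Fintype.card X - 2 * (k + 1)) → ℤ) :=
        LinearEquiv.funCongrLeft ℤ ℤ (finCongr hcc)
      exact ⟨k + 1, by omega, ⟨(e.trans e2).trans e3⟩⟩

theorem coker_skew_adjacency_tree_free (n : ℕ) (B : Matrix (Fin n) (Fin n) ℕ)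
    (hloop : ∀ i, B i i = 0)
    (hsimple : ∀ i j, B i j + B j i ≤ 1)
    (G : SimpleGraph (Fin n))
    (hAdj : ∀ i j, G.Adj i j ↔ 0 < B i j + B j i)
    (hTree : G.IsTree) :
    ∃ k : ℕ, 2 * k ≤ n ∧
      Nonempty
        (cokerG (B.map (Nat.cast : ℕ → ℤ) - (B.map (Nat.cast : ℕ → ℤ)).transpose) ≃+
          (Fin (n - 2 * k) → ℤ)) := by
  classical
  set S : Matrix (Fin n) (Fin n) ℤ :=
    B.map (Nat.cast : ℕ → ℤ) - (B.map (Nat.cast : ℕ → ℤ)).transpose with hSdef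
  have hskew : ∀ i j, S j i = -S i j := by
    intro i j
    simp only [hSdef, Matrix.sub_apply, Matrix.map_apply, Matrix.transpose_apply]
    ring
  have hval : ∀ i j, S i j = 0 ∨ S i j = 1 ∨ S i j = -1 := by
    intro i j
    have h := hsimple i j
    simp only [hSdef, Matrix.sub_apply, Matrix.map_apply, Matrix.transpose_apply]
    omega
  have hG' : ∀ i j, G.Adj i j ↔ S i j ≠ 0 := by
    intro i j
    rw [hAdj i j]
    have h := hsimple i j
    simp only [hSdef, Matrix.sub_apply, Matrix.map_apply, Matrix.transpose_apply]
    omega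
  obtain ⟨k, hk, ⟨e⟩⟩ := mainInd n (Fin n) inferInstance inferInstance
    (by simp) S hskew hval G hG' hTree.IsAcyclic
  refine ⟨k, by simpa using hk, ⟨?_⟩⟩
  exact (e.trans (LinearEquiv.funCongrLeft ℤ ℤ (finCongr (by simp)))).toAddEquiv
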